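/- Let n ≥ 3 and σ₂ > 1, and let d be the probability vector on Fin n with d 0 = 1/σ₂ and d i = (σ₂ − 1)/(σ₂ (n − 1)) for i ≠ 0. Let p be a probability vector of the form p 0 = 1/σ₂, p 1 = y, and p i = (1 − 1/σ₂ − y)/(n − 2) for all i ≥ 2, such that D₂(p‖d) = σ₂. Then the total variation distance satisfies D_TV(p, d) = (σ₂ − 1)√(n − 2)/(√σ₂ · (n − 1)). -/

import Mathlib

lemma sum_split_aux (n : ℕ) (hn : 3 ≤ n) (f : Fin n → ℝ) (v : ℝ)
    (hv : ∀ i : Fin n, 2 ≤ (i : ℕ) → f i = v) :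
    ∑ i, f i = f ⟨0, by omega⟩ + f ⟨1, by omega⟩ + ((n : ℝ) - 2) * v := by
  classical
  set g : ℕ → ℝ := fun j => if h : j < n then f ⟨j, h⟩ else 0 with hg
  have h1 : ∑ i : Fin n, f i = ∑ j ∈ Finset.range n, g j := by
    rw [Finset.sum_range fun j => g j]
    apply Finset.sum_congr rfl
    intro i _
    simp [hg, i.isLt]
  rw [h1, Finset.range_eq_Ico,
    ← Finset.sum_Ico_consecutive g (by omega : 0 ≤ 2) (by omega : 2 ≤ n)]
  have h3 : ∑ j ∈ Finset.Ico 0 2, g j = g 0 + g 1 := by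
    rw [← Finset.range_eq_Ico]
    rw [Finset.sum_range_succ, Finset.sum_range_one]
  have h4 : ∑ j ∈ Finset.Ico 2 n, g j = ((n : ℝ) - 2) * v := by
    rw [Finset.sum_congr rfl (fun j hj => ?_), Finset.sum_const, Nat.card_Ico,
      nsmul_eq_mul]
    · have : ((n - 2 : ℕ) : ℝ) = (n : ℝ) - 2 := by
        have : (2:ℕ) ≤ n := by omega
        push_cast [Nat.cast_sub this]
        ring
      rw [this]
    · rw [Finset.mem_Ico] at hj
      simp only [hg]
      rw [dif_pos hj.2]
      exact hv _ hj.1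
  rw [h3, h4]
  have g0 : g 0 = f ⟨0, by omega⟩ := by simp only [hg]; rw [dif_pos (by omega : (0:ℕ) < n)]
  have g1 : g 1 = f ⟨1, by omega⟩ := by simp only [hg]; rw [dif_pos (by omega : (1:ℕ) < n)]
  rw [g0, g1]

/-- Let `n ≥ 3`, `σ₂ > 1`, `d 0 = 1/σ₂` and `d i = (σ₂−1)/(σ₂(n−1))` for `i ≠ 0`.
If `p` is a probability vector with `p 0 = 1/σ₂`, `p 1 = y`, and
`p i = (1 − 1/σ₂ − y)/(n−2)` for `i ≥ 2`, and `D₂(p‖d) = σ₂`, then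
`D_TV(p, d) = (σ₂−1)√(n−2)/(√σ₂·(n−1))`. -/
theorem tv_of_renyi2_fixed_first (n : ℕ) (hn : 3 ≤ n)
    (σ₂ y : ℝ) (hσ : 1 < σ₂)
    (d : Fin n → ℝ)
    (hd0 : ∀ i : Fin n, (i : ℕ) = 0 → d i = 1 / σ₂)
    (hdi : ∀ i : Fin n, (i : ℕ) ≠ 0 → d i = (σ₂ - 1) / (σ₂ * ((n : ℝ) - 1)))
    (p : Fin n → ℝ) (hp_nonneg : ∀ i, 0 ≤ p i) (hp_sum : ∑ i, p i = 1)
    (hp0 : ∀ i : Fin n, (i : ℕ) = 0 → p i = 1 / σ₂)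
    (hp1 : ∀ i : Fin n, (i : ℕ) = 1 → p i = y)
    (hpi : ∀ i : Fin n, 2 ≤ (i : ℕ) → p i = (1 - 1 / σ₂ - y) / ((n : ℝ) - 2))
    (hD2 : ∑ i, (p i) ^ 2 / d i = σ₂) :
    (1 / 2) * ∑ i, |p i - d i| =
      (σ₂ - 1) * Real.sqrt ((n : ℝ) - 2) / (Real.sqrt σ₂ * ((n : ℝ) - 1)) := by
  have hN : (3 : ℝ) ≤ (n : ℝ) := by exact_mod_cast hn
  set N : ℝ := (n : ℝ) with hNdef
  have hσ0 : (0:ℝ) < σ₂ := by linarith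
  have hN1 : (0:ℝ) < N - 1 := by linarith
  have hN2 : (0:ℝ) < N - 2 := by linarith
  have h1 : σ₂ ≠ 0 := hσ0.ne'
  have h2 : σ₂ - 1 ≠ 0 := ne_of_gt (by linarith)
  have h3 : N - 1 ≠ 0 := hN1.ne'
  have h4 : N - 2 ≠ 0 := hN2.ne'
  set c : ℝ := (σ₂ - 1) / (σ₂ * (N - 1)) with hc
  set z : ℝ := (1 - 1 / σ₂ - y) / (N - 2) with hz
  have hc0 : 0 < c := div_pos (by linarith) (by positivity)
  have hd0' : d ⟨0, by omega⟩ = 1 / σ₂ := hd0 _ rfl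
  have hd1' : d ⟨1, by omega⟩ = c := hdi _ (by simp)
  have hp0' : p ⟨0, by omega⟩ = 1 / σ₂ := hp0 _ rfl
  have hp1' : p ⟨1, by omega⟩ = y := hp1 _ rfl
  have hE : (1/σ₂)^2 / (1/σ₂) + y^2 / c + (N - 2) * (z^2 / c) = σ₂ := by
    rw [sum_split_aux n hn _ (z^2 / c)
      (fun i hi => by rw [hpi i hi, hdi i (by omega)])] at hD2
    rw [hp0', hp1', hd0', hd1'] at hD2
    exact hD2
  have key : (y - c)^2 = (σ₂ - 1)^2 * (N - 2) / (σ₂ * (N - 1)^2) := by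
    rw [hc, hz] at hE
    rw [hc]
    linear_combination (norm := (field_simp; ring)) ((N-2)*(σ₂-1)/(σ₂*(N-1)^2)) * hE
  have hTV : ∑ i, |p i - d i| = 2 * |y - c| := by
    rw [sum_split_aux n hn _ (|z - c|)
      (fun i hi => by rw [hpi i hi, hdi i (by omega)])]
    rw [hd0', hd1', hp0', hp1']
    have hzc : z - c = (c - y) / (N - 2) := by
      rw [hz, hc]; field_simp; ring
    rw [hzc, abs_div, abs_of_pos hN2, abs_sub_comm c y]
    rw [sub_self, abs_zero]
    field_simp
    simp only [hNdef]
    ring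
  rw [hTV]
  have habs : |y - c| = Real.sqrt ((y - c)^2) := (Real.sqrt_sq_eq_abs _).symm
  rw [show (1/2 : ℝ) * (2 * |y - c|) = |y - c| by ring, habs, key]
  have hrw : (σ₂ - 1)^2 * (N - 2) / (σ₂ * (N - 1)^2)
      = ((σ₂ - 1) * Real.sqrt (N - 2) / (Real.sqrt σ₂ * (N - 1)))^2 := by
    rw [div_pow, mul_pow, mul_pow, Real.sq_sqrt (by linarith : (0:ℝ) ≤ N - 2),
      Real.sq_sqrt hσ0.le]
  rw [hrw, Real.sqrt_sq ?_]
  apply div_nonneg (mul_nonneg (by linarith) (Real.sqrt_nonneg _)) (by positivity)
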